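/- Let n ≥ 1 and let A = (a_{ℓ,m}) be a real n×n matrix. Then the sum over all permutations π of {1,…,n} of the characteristic polynomials of A·P_π equals n!·Xⁿ − (n−1)!·(∑_{ℓ=1}^n ∑_{m=1}^n a_{ℓ,m})·Xⁿ⁻¹ as a polynomial in ℝ[X]: ∑_{π ∈ S_n} charpoly(A·P_π) = n!·Xⁿ − (n−1)!·(∑_{ℓ,m} a_{ℓ,m})·Xⁿ⁻¹. -/

import Mathlib

open Polynomial Equiv

lemma sum_perm_apply {M : Type*} [AddCommMonoid M] {n : ℕ} (j : Fin (n+1)) (g : Fin (n+1) → M) :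
    ∑ π : Equiv.Perm (Fin (n+1)), g (π j) = n.factorial • ∑ m, g m := by
  have h1 : ∑ π : Equiv.Perm (Fin (n+1)), g (π j) = ∑ π : Equiv.Perm (Fin (n+1)), g (π 0) := by
    refine Fintype.sum_equiv (Equiv.mulRight (Equiv.swap 0 j)) _ _ fun π => ?_
    simp [Equiv.Perm.mul_apply]
  rw [h1]
  rw [← Fintype.sum_equiv (Equiv.Perm.decomposeFin).symm
    (fun p => g ((Equiv.Perm.decomposeFin.symm p) 0)) (fun π => g (π 0)) (fun p => rfl)]
  simp [Fintype.sum_prod_type, Equiv.Perm.decomposeFin_symm_apply_zero, Finset.sum_const,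
    Fintype.card_perm]
  rw [← Finset.smul_sum]

lemma det_update (n : ℕ) (A : Matrix (Fin n) (Fin n) ℝ) (j m : Fin n) :
    Matrix.det (Matrix.of (Function.update (fun (k i : Fin n) => if k = i then (X:ℝ[X]) else 0)
      j (fun i => C (A i m)))) = C (A j m) * X ^ (n-1) := by
  set M : Matrix (Fin n) (Fin n) ℝ[X] := Matrix.of (Function.update
      (fun (k i : Fin n) => if k = i then (X:ℝ[X]) else 0) j (fun i => C (A i m))) with hM
  have hMj : ∀ i, M j i = C (A i m) := fun i => by simp [hM]
  have hMne : ∀ k i, k ≠ j → M k i = if k = i then X else 0 := fun k i hk => by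
    simp [hM, Function.update_of_ne hk]
  rw [Matrix.det_apply]
  rw [Finset.sum_eq_single (1 : Equiv.Perm (Fin n))]
  · simp only [Equiv.Perm.sign_one, one_smul, Equiv.Perm.one_apply]
    rw [← Finset.mul_prod_erase Finset.univ _ (Finset.mem_univ j), hMj]
    congr 1
    rw [Finset.prod_congr rfl (fun i hi => hMne i i (Finset.ne_of_mem_erase hi))]
    simp [Finset.card_erase_of_mem]
  · intro σ _ hσ
    have : ∃ c, σ c ≠ c ∧ σ c ≠ j := by
      obtain ⟨k, hk⟩ : ∃ k, σ k ≠ k := by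
        by_contra h
        push_neg at h
        exact hσ (Equiv.ext h)
      by_cases hkj : σ k = j
      · have hkj' : k ≠ j := fun h => hk (h ▸ hkj)
        have : σ j ≠ j := fun h => hkj' (σ.injective (hkj.trans h.symm))
        exact ⟨j, this, this⟩
      · exact ⟨k, hk, hkj⟩
    obtain ⟨c, hc1, hc2⟩ := this
    have : M (σ c) c = 0 := by rw [hMne _ _ hc2, if_neg hc1]
    rw [show (∏ i, M (σ i) i) = 0 from Finset.prod_eq_zero (Finset.mem_univ c) this, smul_zero]
  · simp

lemma sum_vanish (n : ℕ) (u w : Fin n → (Fin n → ℝ[X])) (s : Finset (Fin n))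
    (j₁ j₂ : Fin n) (h1 : j₁ ∉ s) (h2 : j₂ ∉ s) (hne : j₁ ≠ j₂) :
    ∑ π : Equiv.Perm (Fin n),
      Matrix.detRowAlternating (s.piecewise u (fun j => w (π j))) = 0 := by
  set τ := Equiv.swap j₁ j₂ with hτ
  set h : Equiv.Perm (Fin n) → ℝ[X] :=
    fun π => Matrix.detRowAlternating (s.piecewise u (fun j => w (π j))) with hh
  have key : ∀ π : Equiv.Perm (Fin n), h (π * τ) = - h π := by
    intro π
    have harg : s.piecewise u (fun j => w ((π * τ) j))
        = (s.piecewise u (fun j => w (π j))) ∘ τ := by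
      funext j
      by_cases hj : j ∈ s
      · have hj1 : j ≠ j₁ := fun h => h1 (h ▸ hj)
        have hj2 : j ≠ j₂ := fun h => h2 (h ▸ hj)
        have : τ j = j := Equiv.swap_apply_of_ne_of_ne hj1 hj2
        simp [Finset.piecewise_eq_of_mem _ _ _ hj, this, Function.comp,
          Finset.piecewise_eq_of_mem _ _ _ (this ▸ hj)]
      · have hτj : τ j ∉ s := by
          rcases Equiv.swap_apply_def j₁ j₂ j with _
          by_cases e1 : j = j₁
          · rw [e1, hτ, Equiv.swap_apply_left]; exact h2
          · by_cases e2 : j = j₂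
            · rw [e2, hτ, Equiv.swap_apply_right]; exact h1
            · rwa [Equiv.swap_apply_of_ne_of_ne e1 e2]
        simp [Function.comp, Finset.piecewise_eq_of_notMem _ _ _ hj,
          Finset.piecewise_eq_of_notMem _ _ _ hτj, Equiv.Perm.mul_apply]
    rw [hh]
    simp only []
    rw [harg, AlternatingMap.map_perm]
    simp [hτ, Equiv.Perm.sign_swap hne]
  have hS : ∑ π : Equiv.Perm (Fin n), h π = - ∑ π : Equiv.Perm (Fin n), h π := by
    conv_lhs => rw [← Fintype.sum_equiv (Equiv.mulRight τ) (fun π => h (π * τ)) h (fun π => rfl)]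
    rw [← Finset.sum_neg_distrib]
    exact Finset.sum_congr rfl fun π _ => key π
  have : (2 : ℝ[X]) * ∑ π : Equiv.Perm (Fin n), h π = 0 := by
    rw [two_mul]; nth_rewrite 2 [hS]; ring
  rcases mul_eq_zero.mp this with h0 | h0
  · exact absurd h0 two_ne_zero
  · exact h0

theorem stmt14 (n : ℕ) (hn : 1 ≤ n) (A : Matrix (Fin n) (Fin n) ℝ) :
    ∑ π : Equiv.Perm (Fin n), (A * π.permMatrix ℝ).charpoly =
      C (n.factorial : ℝ) * X ^ n -
        C (((n - 1).factorial : ℝ) * ∑ i : Fin n, ∑ j : Fin n, A i j) * X ^ (n - 1) := by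
  obtain ⟨N, rfl⟩ : ∃ N, n = N + 1 := ⟨n - 1, (Nat.succ_pred_eq_of_pos hn).symm⟩
  -- row vectors
  set u : Fin (N+1) → Fin (N+1) → ℝ[X] := fun k i => if k = i then (X:ℝ[X]) else 0 with hu
  set v : Fin (N+1) → Fin (N+1) → ℝ[X] := fun m i => C (A i m) with hv
  -- Step A: charpoly as det of a matrix whose rows depend on π
  have hch : ∀ π : Equiv.Perm (Fin (N+1)), (A * π.permMatrix ℝ).charpoly
      = Matrix.detRowAlternating (fun j => u j - v (π⁻¹ j)) := by
    intro π
    rw [Matrix.charpoly, ← Matrix.det_transpose]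
    have hent : (A * π.permMatrix ℝ) = A.submatrix id π.symm :=
      PEquiv.mul_toMatrix_toPEquiv A π
    show Matrix.det _ = Matrix.det (Matrix.of fun j => u j - v (π⁻¹ j))
    congr 1
    ext j k
    rw [Matrix.transpose_apply, Matrix.charmatrix_apply, hent]
    simp only [Matrix.sub_apply, Matrix.diagonal_apply, Matrix.submatrix_apply, id,
      Matrix.of_apply, Pi.sub_apply, hu, hv]
    have hpi : (π⁻¹ : Equiv.Perm (Fin (N+1))) j = (Equiv.symm π) j := rfl
    rw [hpi]
    congr 1
    simp [eq_comm]
  rw [Finset.sum_congr rfl (fun π _ => hch π)]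
  -- Step C: reindex π ↦ π⁻¹
  rw [Fintype.sum_equiv (Equiv.inv (Equiv.Perm (Fin (N+1))))
    (fun π => Matrix.detRowAlternating (fun j => u j - v (π⁻¹ j)))
    (fun π => Matrix.detRowAlternating (fun j => u j - v (π j))) ?_]
  swap
  · intro π; rfl
  -- Step D: multilinear expansion
  have hexp : ∀ π : Equiv.Perm (Fin (N+1)),
      Matrix.detRowAlternating (fun j => u j - v (π j))
        = ∑ s : Finset (Fin (N+1)),
            Matrix.detRowAlternating (s.piecewise u (fun j => -v (π j))) := by
    intro π
    have : (fun j => u j - v (π j)) = u + (fun j => -v (π j)) := by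
      funext j; simp [sub_eq_add_neg]
    rw [this]
    exact Matrix.detRowAlternating.toMultilinearMap.map_add_univ u (fun j => -v (π j))
  simp only [hexp]
  rw [Finset.sum_comm]
  -- Step F: classify subsets
  set F : Finset (Fin (N+1)) → ℝ[X] := fun s => ∑ π : Equiv.Perm (Fin (N+1)),
      Matrix.detRowAlternating (s.piecewise u (fun j => -v (π j))) with hF
  have hsplit : ∑ s : Finset (Fin (N+1)), F s
      = ∑ s ∈ Finset.univ.filter (fun s : Finset (Fin (N+1)) => sᶜ.card ≤ 1), F s := by
    rw [← Finset.sum_filter_add_sum_filter_not Finset.univ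
      (fun s : Finset (Fin (N+1)) => sᶜ.card ≤ 1) F]
    have : ∑ s ∈ Finset.univ.filter (fun s : Finset (Fin (N+1)) => ¬ sᶜ.card ≤ 1), F s = 0 := by
      refine Finset.sum_eq_zero fun s hs => ?_
      rw [Finset.mem_filter] at hs
      have h2 : 1 < sᶜ.card := lt_of_not_ge hs.2
      obtain ⟨j₁, hj₁, j₂, hj₂, hne⟩ := Finset.one_lt_card.mp h2
      exact sum_vanish (N+1) u (fun m => -v m) s j₁ j₂
        (Finset.mem_compl.mp hj₁) (Finset.mem_compl.mp hj₂) hne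
    rw [this, add_zero]
  rw [hsplit]
  have hset : Finset.univ.filter (fun s : Finset (Fin (N+1)) => sᶜ.card ≤ 1)
      = insert Finset.univ ((Finset.univ : Finset (Fin (N+1))).image
          (fun j => ({j} : Finset (Fin (N+1)))ᶜ)) := by
    ext s
    simp only [Finset.mem_filter, Finset.mem_univ, true_and, Finset.mem_insert,
      Finset.mem_image]
    constructor
    · intro h
      interval_cases h' : sᶜ.card
      · left
        have : sᶜ = ∅ := Finset.card_eq_zero.mp h'
        have := congrArg (·ᶜ) this
        simpa using this
      · right
        obtain ⟨j, hj⟩ := Finset.card_eq_one.mp h'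
        refine ⟨j, ?_⟩
        have := congrArg (·ᶜ) hj
        simpa using this.symm
    · rintro (rfl | ⟨j, rfl⟩)
      · simp
      · simp
  rw [hset, Finset.sum_insert, Finset.sum_image]
  · -- main computation
    have hFuniv : F Finset.univ = ((N+1).factorial : ℝ[X]) * X ^ (N+1) := by
      rw [hF]
      simp only [Finset.piecewise_univ]
      have : Matrix.detRowAlternating u = (X:ℝ[X]) ^ (N+1) := by
        show Matrix.det (Matrix.of u) = X ^ (N+1)
        have : Matrix.of u = Matrix.diagonal (fun _ => (X:ℝ[X])) := by
          ext k i; simp [hu, Matrix.diagonal_apply]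
        rw [this, Matrix.det_diagonal]
        simp
      rw [this]
      simp [Finset.sum_const, Fintype.card_perm, nsmul_eq_mul]
    have hFj : ∀ j : Fin (N+1), F ({j} : Finset (Fin (N+1)))ᶜ
        = -((N.factorial : ℝ[X]) * (∑ m, C (A j m)) * X ^ N) := by
      intro j
      rw [hF]
      have hpw : ∀ π : Equiv.Perm (Fin (N+1)), (({j} : Finset (Fin (N+1)))ᶜ).piecewise u
          (fun k => -v (π k)) = Function.update u j (-v (π j)) := by
        intro π
        funext k
        by_cases hk : k = j
        · subst hk
          rw [Finset.piecewise_eq_of_notMem _ _ _ (by simp), Function.update_self]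
        · rw [Finset.piecewise_eq_of_mem _ _ _ (by simp [hk]), Function.update_of_ne hk]
      simp only [hpw]
      have hdet : ∀ m : Fin (N+1), Matrix.detRowAlternating (Function.update u j (-v m))
          = -(C (A j m) * X ^ N) := by
        intro m
        have : (-v m) = (-1 : ℝ[X]) • (v m) := by funext i; simp
        rw [this, AlternatingMap.map_update_smul]
        have := det_update (N+1) A j m
        show (-1 : ℝ[X]) • Matrix.det (Matrix.of (Function.update u j (v m))) = _
        rw [hu, hv] at *
        rw [this]
        simp
      simp only [hdet]
      rw [sum_perm_apply j (fun m => -(C (A j m) * X ^ N))]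
      rw [Finset.sum_neg_distrib, ← Finset.sum_mul, nsmul_eq_mul]
      ring
    rw [hFuniv]
    rw [Finset.sum_congr rfl (fun j _ => hFj j)]
    rw [Finset.sum_neg_distrib]
    have : ∑ j : Fin (N+1), (N.factorial : ℝ[X]) * (∑ m, C (A j m)) * X ^ N
        = C ((N.factorial : ℝ) * ∑ i : Fin (N+1), ∑ m : Fin (N+1), A i m) * X ^ N := by
      simp only [map_mul, map_sum, Polynomial.C_eq_natCast, Finset.mul_sum, Finset.sum_mul,
        mul_assoc]
    rw [this]
    have hne : (N + 1 : ℕ) - 1 = N := by simp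
    rw [hne]
    have : (C (((N+1).factorial : ℝ)) : ℝ[X]) = (((N+1)).factorial : ℝ[X]) := by
      simp [Polynomial.C_eq_natCast]
    rw [this, sub_eq_add_neg]
  · -- injectivity for sum_image
    intro j _ k _ h
    have := congrArg (·ᶜ) h
    simp only [compl_compl] at this
    exact Finset.singleton_injective this
  · -- univ not in image
    simp only [Finset.mem_image, not_exists]
    rintro j ⟨-, h⟩
    have := congrArg Finset.card h
    rw [Finset.card_compl] at this
    simp at this
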